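/- In the micro–macro acceleration scheme for the linear SDE dX = AX dt + B dW with one inner Euler–Maruyama step of size δt per extrapolation of step Δt, the cumulant generating functions K_n of the laws X_n satisfy the recursion K_n(θ) = K_{n-1}((I + δt Aᵀ)(θ + λ^s_n ⊕ 0^f)) − K_{n-1}((I + δt Aᵀ)(λ^s_n ⊕ 0^f)) + (δt/2)[θᵀBBᵀθ + (λ^s_n ⊕ 0^f)ᵀBBᵀθ + θᵀBBᵀ(λ^s_n ⊕ 0^f)], and if the effective domain of K_{n-1} is all of R^d then so is that of K_n. -/

import Mathlib

open MeasureTheory ProbabilityTheory Matrix Real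
open scoped NNReal ENNReal

/-- Cumulant generating function of a measure on `ℝ^d`, valued in `(−∞, +∞]`. -/
noncomputable def mcgf {ι : Type*} [Fintype ι] [MeasurableSpace (ι → ℝ)]
    (μ : Measure (ι → ℝ)) (θ : ι → ℝ) : EReal :=
  ENNReal.log (∫⁻ x, ENNReal.ofReal (Real.exp (θ ⬝ᵥ x)) ∂μ)

section helpers

variable {δ : Type*} [DecidableEq δ]

lemma lmarginal_prod_aux (μ : δ → Measure ℝ) [∀ i, SigmaFinite (μ i)]
    (f : δ → ℝ → ℝ≥0∞) (hf : ∀ i, Measurable (f i)) (s : Finset δ) :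
    ∀ x : δ → ℝ, (∫⋯∫⁻_s, (fun y => ∏ i ∈ s, f i (y i)) ∂μ) x
      = ∏ i ∈ s, ∫⁻ y, f i y ∂(μ i) := by
  induction s using Finset.induction_on with
  | empty => intro x; simp
  | @insert i s hi ih =>
    intro x
    have hmeas : Measurable fun y : δ → ℝ => ∏ j ∈ insert i s, f j (y j) :=
      Finset.measurable_prod _ fun j _ => (hf j).comp (measurable_pi_apply j)
    rw [lmarginal_insert _ hmeas hi]
    have hpull : ∀ z : δ → ℝ,
        (∫⋯∫⁻_s, (fun y => ∏ j ∈ insert i s, f j (y j)) ∂μ) z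
          = f i (z i) * (∫⋯∫⁻_s, (fun y => ∏ j ∈ s, f j (y j)) ∂μ) z := by
      intro z
      unfold lmarginal
      have h1 : ∀ y : (∀ j : s, ℝ),
          (∏ j ∈ insert i s, f j (Function.updateFinset z s y j))
            = f i (z i) * ∏ j ∈ s, f j (Function.updateFinset z s y j) := by
        intro y
        rw [Finset.prod_insert hi]
        congr 2
        simp [Function.updateFinset, hi]
      simp_rw [h1]
      rw [lintegral_const_mul]
      exact (Finset.measurable_prod _ fun j _ => (hf j).comp (measurable_pi_apply j)).comp
        measurable_updateFinset
    simp_rw [hpull, ih, Function.update_self]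
    rw [lintegral_mul_const _ (hf i), Finset.prod_insert hi]

lemma lintegral_pi_prod [Fintype δ] (μ : δ → Measure ℝ) [∀ i, SigmaFinite (μ i)]
    (f : δ → ℝ → ℝ≥0∞) (hf : ∀ i, Measurable (f i)) :
    ∫⁻ x, ∏ i, f i (x i) ∂(Measure.pi μ) = ∏ i, ∫⁻ y, f i y ∂(μ i) := by
  rw [lintegral_eq_lmarginal_univ (fun _ => (0 : ℝ))]
  exact lmarginal_prod_aux μ f hf _ _

lemma lintegral_exp_mul_gaussianReal (t : ℝ) {v : ℝ≥0} (hv : v ≠ 0) :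
    ∫⁻ x, ENNReal.ofReal (rexp (t * x)) ∂(gaussianReal 0 v)
      = ENNReal.ofReal (rexp ((v : ℝ) * t ^ 2 / 2)) := by
  have hvpos : (0 : ℝ) < v := by exact_mod_cast hv.bot_lt
  rw [gaussianReal_of_var_ne_zero 0 hv]
  rw [show (fun x : ℝ => ENNReal.ofReal (rexp (t * x)))
      = fun x => (ENNReal.ofReal ∘ rexp ∘ fun x => t * x) x from rfl]
  rw [lintegral_withDensity_eq_lintegral_mul _ (measurable_gaussianPDF 0 v)
      (ENNReal.measurable_ofReal.comp (Real.measurable_exp.comp (measurable_const_mul t)))]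
  have hpt : ∀ x : ℝ, (gaussianPDF 0 v x) * ENNReal.ofReal (rexp (t * x))
      = ENNReal.ofReal (rexp ((v : ℝ) * t ^ 2 / 2)) * ENNReal.ofReal (gaussianPDFReal ((v:ℝ)*t) v x) := by
    intro x
    rw [gaussianPDF_def]
    rw [← ENNReal.ofReal_mul (gaussianPDFReal_nonneg 0 v x),
      ← ENNReal.ofReal_mul (le_of_lt (exp_pos _))]
    congr 1
    simp only [gaussianPDFReal]
    rw [mul_assoc, ← Real.exp_add,
      show -(x - 0) ^ 2 / (2 * (v:ℝ)) + t * x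
          = (v:ℝ) * t ^ 2 / 2 + -(x - (v:ℝ) * t) ^ 2 / (2 * (v:ℝ)) from by
        field_simp; ring,
      Real.exp_add]
    ring
  calc ∫⁻ a, gaussianPDF 0 v a * (ENNReal.ofReal ∘ rexp ∘ fun x => t * x) a
      = ∫⁻ a, ENNReal.ofReal (rexp ((v : ℝ) * t ^ 2 / 2))
          * ENNReal.ofReal (gaussianPDFReal ((v:ℝ)*t) v a) := by
        refine lintegral_congr fun a => ?_
        exact hpt a
    _ = ENNReal.ofReal (rexp ((v : ℝ) * t ^ 2 / 2)) := by
        rw [lintegral_const_mul _ ((measurable_gaussianPDFReal _ _).ennreal_ofReal),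
          lintegral_gaussianPDFReal_eq_one _ hv, mul_one]

lemma lintegral_exp_dot_pi_gaussian {m : ℕ} (a : Fin m → ℝ) {v : ℝ≥0} (hv : v ≠ 0) :
    ∫⁻ w, ENNReal.ofReal (rexp (a ⬝ᵥ w)) ∂(Measure.pi fun _ : Fin m => gaussianReal 0 v)
      = ENNReal.ofReal (rexp ((v : ℝ) / 2 * (a ⬝ᵥ a))) := by
  have h1 : ∀ w : Fin m → ℝ, ENNReal.ofReal (rexp (a ⬝ᵥ w))
      = ∏ i, ENNReal.ofReal (rexp (a i * w i)) := by
    intro w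
    rw [dotProduct, Real.exp_sum, ENNReal.ofReal_prod_of_nonneg (fun i _ => (exp_pos _).le)]
  simp_rw [h1]
  rw [lintegral_pi_prod _ (fun i y => ENNReal.ofReal (rexp (a i * y))) (fun i => ENNReal.measurable_ofReal.comp
    (Real.measurable_exp.comp (measurable_const_mul (a i))))]
  simp_rw [lintegral_exp_mul_gaussianReal _ hv]
  rw [← ENNReal.ofReal_prod_of_nonneg (fun i _ => (exp_pos _).le), ← Real.exp_sum]
  congr 1
  rw [dotProduct, Finset.mul_sum]
  exact congrArg rexp (Finset.sum_congr rfl fun i _ => by ring)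

end helpers

/-- In the micro–macro acceleration scheme for `dX = AX dt + B dW` with
one inner Euler–Maruyama step of size `δt` per extrapolation step, if `X_n` is obtained
from `X_{n-1}` by `X^{δt} = (I + δt A) X_{n-1} + B δW` (with `δW ~ N(0, δt I)` independent
of `X_{n-1}`) followed by KL-matching with Lagrange multiplier `λ^s_n`, then the cumulant
generating functions satisfy the recursion
`K_n(θ) = K_{n-1}((I + δt Aᵀ)(θ + λ^s_n ⊕ 0^f)) − K_{n-1}((I + δt Aᵀ)(λ^s_n ⊕ 0^f))
 + (δt/2)[θᵀBBᵀθ + (λ^s_n ⊕ 0^f)ᵀBBᵀθ + θᵀBBᵀ(λ^s_n ⊕ 0^f)]`,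
and the full effective domain propagates from `K_{n-1}` to `K_n`. -/
theorem microMacro_cgf_recursion
    (ds df m : ℕ) {Ω : Type*} [MeasurableSpace Ω] (P : Measure Ω) [IsProbabilityMeasure P]
    (A : Matrix (Fin ds ⊕ Fin df) (Fin ds ⊕ Fin df) ℝ)
    (B : Matrix (Fin ds ⊕ Fin df) (Fin m) ℝ)
    (δt : ℝ≥0) (hδt : 0 < δt)
    (Xprev : Ω → (Fin ds ⊕ Fin df) → ℝ) (δW : Ω → Fin m → ℝ)
    (hXm : Measurable Xprev) (hWm : Measurable δW)
    (hindep : IndepFun Xprev δW P)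
    (hlaw : P.map δW = Measure.pi (fun _ : Fin m => gaussianReal 0 δt))
    -- K_{n-1} has full effective domain
    (hdom : ∀ θ, mcgf (P.map Xprev) θ < ⊤)
    (lam : Fin ds → ℝ) :
    let pad := Sum.elim lam (0 : Fin df → ℝ)
    let M := (1 : Matrix (Fin ds ⊕ Fin df) (Fin ds ⊕ Fin df) ℝ) + (δt : ℝ) • A
    let Xem := fun ω => M.mulVec (Xprev ω) + B.mulVec (δW ω)
    let Qn := (P.map Xem).withDensity (fun x => ENNReal.ofReal
      (Real.exp (pad ⬝ᵥ x - Real.log (∫ x, Real.exp (pad ⬝ᵥ x) ∂(P.map Xem)))))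
    (∀ θ : (Fin ds ⊕ Fin df) → ℝ,
      mcgf Qn θ
        = mcgf (P.map Xprev) (Mᵀ.mulVec (θ + pad))
          - mcgf (P.map Xprev) (Mᵀ.mulVec pad)
          + ((((δt : ℝ) / 2) * (θ ⬝ᵥ (B * Bᵀ).mulVec θ + pad ⬝ᵥ (B * Bᵀ).mulVec θ
              + θ ⬝ᵥ (B * Bᵀ).mulVec pad) : ℝ) : EReal)) ∧
    (∀ θ : (Fin ds ⊕ Fin df) → ℝ, mcgf Qn θ < ⊤) := by
  intro pad M Xem Qn
  classical
  set Z : ℝ := ∫ x, rexp (pad ⬝ᵥ x) ∂(P.map Xem) with hZdef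
  -- basic measurability
  have hdotm : ∀ c : (Fin ds ⊕ Fin df) → ℝ,
      Measurable fun x : (Fin ds ⊕ Fin df) → ℝ => c ⬝ᵥ x := by
    intro c
    simp only [dotProduct]
    exact Finset.measurable_sum _ fun i _ => by fun_prop
  have hem : ∀ c : (Fin ds ⊕ Fin df) → ℝ,
      Measurable fun x : (Fin ds ⊕ Fin df) → ℝ => ENNReal.ofReal (rexp (c ⬝ᵥ x)) :=
    fun c => ENNReal.measurable_ofReal.comp (Real.measurable_exp.comp (hdotm c))
  have hMv : Measurable fun x : (Fin ds ⊕ Fin df) → ℝ => M.mulVec x :=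
    measurable_pi_lambda _ fun i => by
      simp only [Matrix.mulVec, dotProduct]
      exact Finset.measurable_sum _ fun j _ => by fun_prop
  have hBv : Measurable fun w : Fin m → ℝ => B.mulVec w :=
    measurable_pi_lambda _ fun i => by
      simp only [Matrix.mulVec, dotProduct]
      exact Finset.measurable_sum _ fun j _ => by fun_prop
  have hXemM : Measurable Xem := (hMv.comp hXm).add (hBv.comp hWm)
  have hPXprev : IsProbabilityMeasure (P.map Xprev) :=
    Measure.isProbabilityMeasure_map hXm.aemeasurable
  have hPXem : IsProbabilityMeasure (P.map Xem) :=
    Measure.isProbabilityMeasure_map hXemM.aemeasurable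
  -- notation
  set I : ((Fin ds ⊕ Fin df) → ℝ) → ℝ≥0∞ :=
    fun c => ∫⁻ x, ENNReal.ofReal (rexp (c ⬝ᵥ x)) ∂(P.map Xprev) with hIdef
  set q : ((Fin ds ⊕ Fin df) → ℝ) → ℝ :=
    fun c => (δt : ℝ) / 2 * (c ⬝ᵥ (B * Bᵀ).mulVec c) with hqdef
  -- positivity
  have hIpos : ∀ (ν : Measure ((Fin ds ⊕ Fin df) → ℝ)), IsProbabilityMeasure ν →
      ∀ c : (Fin ds ⊕ Fin df) → ℝ, 0 < ∫⁻ x, ENNReal.ofReal (rexp (c ⬝ᵥ x)) ∂ν := by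
    intro ν hν c
    rw [lintegral_pos_iff_support (hem c)]
    have hsupp : Function.support (fun x : (Fin ds ⊕ Fin df) → ℝ =>
        ENNReal.ofReal (rexp (c ⬝ᵥ x))) = Set.univ :=
      Set.eq_univ_of_forall fun x => (ENNReal.ofReal_pos.mpr (exp_pos _)).ne'
    rw [hsupp, measure_univ]
    exact zero_lt_one
  have hIfin : ∀ c, I c < ⊤ := by
    intro c
    have h := hdom c
    rw [mcgf, ENNReal.log_lt_top_iff] at h
    exact h
  have hIpos' : ∀ c, 0 < I c := fun c => hIpos _ hPXprev c
  -- key factorization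
  have key : ∀ c : (Fin ds ⊕ Fin df) → ℝ,
      ∫⁻ x, ENNReal.ofReal (rexp (c ⬝ᵥ x)) ∂(P.map Xem)
        = I (Mᵀ.mulVec c) * ENNReal.ofReal (rexp (q c)) := by
    intro c
    rw [lintegral_map (hem c) hXemM]
    have hBdot : Measurable fun w : Fin m → ℝ => (Bᵀ.mulVec c) ⬝ᵥ w := by
      simp only [dotProduct]
      exact Finset.measurable_sum _ fun i _ =>
        by fun_prop
    have hBdm : Measurable fun w : Fin m → ℝ =>
        ENNReal.ofReal (rexp (Bᵀ.mulVec c ⬝ᵥ w)) :=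
      ENNReal.measurable_ofReal.comp (Real.measurable_exp.comp hBdot)
    have hsplit : ∀ ω, ENNReal.ofReal (rexp (c ⬝ᵥ Xem ω))
        = ((fun x => ENNReal.ofReal (rexp (Mᵀ.mulVec c ⬝ᵥ x))) ∘ Xprev) ω
          * ((fun w => ENNReal.ofReal (rexp (Bᵀ.mulVec c ⬝ᵥ w))) ∘ δW) ω := by
      intro ω
      simp only [Function.comp_apply]
      rw [← ENNReal.ofReal_mul (exp_pos _).le, ← Real.exp_add]
      congr 2
      show c ⬝ᵥ (M.mulVec (Xprev ω) + B.mulVec (δW ω)) = _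
      rw [dotProduct_add, Matrix.mulVec_transpose, Matrix.mulVec_transpose,
        ← dotProduct_mulVec, ← dotProduct_mulVec]
    calc ∫⁻ ω, ENNReal.ofReal (rexp (c ⬝ᵥ Xem ω)) ∂P
        = ∫⁻ ω, ((fun x => ENNReal.ofReal (rexp (Mᵀ.mulVec c ⬝ᵥ x))) ∘ Xprev) ω
            * ((fun w => ENNReal.ofReal (rexp (Bᵀ.mulVec c ⬝ᵥ w))) ∘ δW) ω ∂P :=
          lintegral_congr hsplit
      _ = (∫⁻ ω, ((fun x => ENNReal.ofReal (rexp (Mᵀ.mulVec c ⬝ᵥ x))) ∘ Xprev) ω ∂P)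
            * ∫⁻ ω, ((fun w => ENNReal.ofReal (rexp (Bᵀ.mulVec c ⬝ᵥ w))) ∘ δW) ω ∂P :=
          lintegral_mul_eq_lintegral_mul_lintegral_of_indepFun''
            ((hem _).comp hXm).aemeasurable (hBdm.comp hWm).aemeasurable
            (hindep.comp (hem _) hBdm)
      _ = I (Mᵀ.mulVec c) * ENNReal.ofReal (rexp (q c)) := by
          congr 1
          · exact (lintegral_map (hem _) hXm).symm
          · rw [show (∫⁻ ω, ((fun w => ENNReal.ofReal (rexp (Bᵀ.mulVec c ⬝ᵥ w))) ∘ δW) ω ∂P)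
                = ∫⁻ w, ENNReal.ofReal (rexp (Bᵀ.mulVec c ⬝ᵥ w)) ∂(P.map δW) from
                (lintegral_map hBdm hWm).symm, hlaw,
              lintegral_exp_dot_pi_gaussian _ hδt.ne']
            congr 2
            show (δt : ℝ) / 2 * (Bᵀ.mulVec c ⬝ᵥ Bᵀ.mulVec c) = (δt : ℝ) / 2 * (c ⬝ᵥ (B * Bᵀ).mulVec c)
            congr 1
            rw [← Matrix.mulVec_mulVec, dotProduct_mulVec c, ← Matrix.mulVec_transpose]
  have hQn : Qn = (P.map Xem).withDensity
      (fun x => ENNReal.ofReal (rexp (pad ⬝ᵥ x - Real.log Z))) := rfl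
  have hZ : Z = (I (Mᵀ.mulVec pad)).toReal * rexp (q pad) := by
    rw [hZdef, integral_eq_lintegral_of_nonneg_ae
      (Filter.Eventually.of_forall fun x => (exp_pos _).le)
      (Real.measurable_exp.comp (hdotm pad)).aestronglyMeasurable, key pad,
      ENNReal.toReal_mul, ENNReal.toReal_ofReal (exp_pos _).le]
  have hItR : 0 < (I (Mᵀ.mulVec pad)).toReal :=
    ENNReal.toReal_pos (hIpos' _).ne' (hIfin _).ne
  have hZpos : 0 < Z := by rw [hZ]; exact mul_pos hItR (exp_pos _)
  have hlogZ : Real.log Z = Real.log (I (Mᵀ.mulVec pad)).toReal + q pad := by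
    rw [hZ, Real.log_mul hItR.ne' (exp_ne_zero _), Real.log_exp]
  have hdens : Measurable fun x : (Fin ds ⊕ Fin df) → ℝ =>
      ENNReal.ofReal (rexp (pad ⬝ᵥ x - Real.log Z)) :=
    ENNReal.measurable_ofReal.comp (Real.measurable_exp.comp ((hdotm pad).sub_const _))
  have hQlint : ∀ θ : (Fin ds ⊕ Fin df) → ℝ,
      ∫⁻ x, ENNReal.ofReal (rexp (θ ⬝ᵥ x)) ∂Qn
        = ENNReal.ofReal (rexp (- Real.log Z))
          * (I (Mᵀ.mulVec (θ + pad)) * ENNReal.ofReal (rexp (q (θ + pad)))) := by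
    intro θ
    calc ∫⁻ x, ENNReal.ofReal (rexp (θ ⬝ᵥ x)) ∂Qn
        = ∫⁻ x, ((fun x => ENNReal.ofReal (rexp (pad ⬝ᵥ x - Real.log Z)))
            * fun x => ENNReal.ofReal (rexp (θ ⬝ᵥ x))) x ∂(P.map Xem) := by
          rw [hQn]; exact lintegral_withDensity_eq_lintegral_mul _ hdens (hem θ)
      _ = ∫⁻ x, ENNReal.ofReal (rexp (- Real.log Z))
            * ENNReal.ofReal (rexp ((θ + pad) ⬝ᵥ x)) ∂(P.map Xem) := by
          refine lintegral_congr fun x => ?_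
          simp only [Pi.mul_apply]
          rw [← ENNReal.ofReal_mul (exp_pos _).le, ← ENNReal.ofReal_mul (exp_pos _).le,
            ← Real.exp_add, ← Real.exp_add]
          congr 2
          rw [add_dotProduct]
          ring
      _ = ENNReal.ofReal (rexp (- Real.log Z))
            * (I (Mᵀ.mulVec (θ + pad)) * ENNReal.ofReal (rexp (q (θ + pad)))) := by
          rw [lintegral_const_mul _ (hem _), key]
  have hlogI : ∀ c, ENNReal.log (I c) = ((Real.log (I c).toReal : ℝ) : EReal) :=
    fun c => ENNReal.log_pos_real (hIpos' c).ne' (hIfin c).ne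
  have hmc : ∀ c, mcgf (P.map Xprev) c = ((Real.log (I c).toReal : ℝ) : EReal) :=
    fun c => hlogI c
  have hmain : ∀ θ : (Fin ds ⊕ Fin df) → ℝ,
      mcgf Qn θ = ((- (Real.log (I (Mᵀ.mulVec pad)).toReal + q pad)
        + (Real.log (I (Mᵀ.mulVec (θ + pad))).toReal + q (θ + pad)) : ℝ) : EReal) := by
    intro θ
    show ENNReal.log (∫⁻ x, ENNReal.ofReal (rexp (θ ⬝ᵥ x)) ∂Qn) = _
    rw [hQlint θ, ENNReal.log_mul_add, ENNReal.log_mul_add,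
      ENNReal.log_ofReal_of_pos (exp_pos _), ENNReal.log_ofReal_of_pos (exp_pos _),
      Real.log_exp, Real.log_exp, hlogI, hlogZ]
    norm_cast
  constructor
  · intro θ
    rw [hmain θ, hmc, hmc]
    have hexp : (θ + pad) ⬝ᵥ (B * Bᵀ).mulVec (θ + pad)
        = θ ⬝ᵥ (B * Bᵀ).mulVec θ + θ ⬝ᵥ (B * Bᵀ).mulVec pad
          + pad ⬝ᵥ (B * Bᵀ).mulVec θ + pad ⬝ᵥ (B * Bᵀ).mulVec pad := by
      rw [Matrix.mulVec_add, dotProduct_add, add_dotProduct, add_dotProduct]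
      ring
    norm_cast
    simp only [hqdef, hexp]
    push_cast
    ring
  · intro θ
    rw [hmain θ]
    exact EReal.coe_lt_top _
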